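/- Let λ(p) = p^{n+1} + v_n p^{n-1} + ⋯ + v₁ + u/(p-w) with u ≠ 0, simple distinct critical points r₁,…,r_{n+2} avoiding w and with λ(r_k) ≠ λ(r_i) for k ≠ i. Then u²·Σ_{k≠i} (λ(r_k)-λ(r_i))/(λ''(r_k)(r_k-r_i)²(r_k-w)⁴) + (terms at z=r_i and z=w) = 0, where the full statement is: the sum over all poles of the residues of h₃(z) = (λ(z)-λ(r_i))/(λ'(z)(z-r_i)²(z-w)⁴) is zero (since h₃(z) = O(z^{-2}) as z → ∞). -/

import Mathlib

open Finset

/-- `λ(p) = p^{n+1} + v_n p^{n-1} + ⋯ + v₂ p + v₁ + u/(p-w)`. -/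
noncomputable def lam (n : ℕ) (v : ℕ → ℂ) (u w : ℂ) : ℂ → ℂ :=
  fun p => p ^ (n + 1) + (∑ i ∈ Finset.range n, v (i + 1) * p ^ i) + u / (p - w)

/-- Residue of `f` at a pole `A` of order at most `N ≥ 1`:
`(1/(N-1)!) lim_{z→A} d^{N-1}/dz^{N-1} [(z-A)^N f(z)]`. -/
noncomputable def residueOrd (N : ℕ) (f : ℂ → ℂ) (A : ℂ) : ℂ :=
  Filter.limUnder (nhdsWithin A {A}ᶜ)
    (fun z => ((Nat.factorial (N - 1) : ℂ))⁻¹ *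
      iteratedDeriv (N - 1) (fun t => (t - A) ^ N * f t) z)

open Polynomial Filter in
set_option maxHeartbeats 1600000 in
/-- the sum over all poles of the residues of
`h₃(z) = (λ(z)-λ(r_i))/(λ'(z)(z-r_i)²(z-w)⁴)` is zero (since `h₃ = O(z⁻²)` as
`z → ∞`); the poles are the critical points `r_k` (simple poles, including
`z = r_i`) and `z = w` (a pole of order 3). -/
theorem residue_theorem_h3
    (n : ℕ) (v : ℕ → ℂ) (u w : ℂ) (hu : u ≠ 0)
    (r : Fin (n + 2) → ℂ) (hinj : Function.Injective r)
    (hw : ∀ k, r k ≠ w)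
    (hcrit : ∀ k, deriv (lam n v u w) (r k) = 0)
    (i : Fin (n + 2)) :
    (∑ k : Fin (n + 2),
        residueOrd 1 (fun z => (lam n v u w z - lam n v u w (r i)) /
          (deriv (lam n v u w) z * (z - r i) ^ 2 * (z - w) ^ 4)) (r k))
      + residueOrd 3 (fun z => (lam n v u w z - lam n v u w (r i)) /
          (deriv (lam n v u w) z * (z - r i) ^ 2 * (z - w) ^ 4)) w
      = 0 := by
  have hn1 : ((n:ℂ) + 1) ≠ 0 := Nat.cast_add_one_ne_zero n
  set L := lam n v u w with hLdef
  clear_value L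
  obtain ⟨P0, hP0⟩ : ∃ x : ℂ[X], x = X ^ (n+1) + ∑ j ∈ Finset.range n, C (v (j+1)) * X ^ j := ⟨_, rfl⟩
  obtain ⟨Q, hQ⟩ : ∃ x : ℂ[X], x = derivative P0 * (X - C w) ^ 2 - C u := ⟨_, rfl⟩
  have hLval : ∀ z, L z = P0.eval z + u / (z - w) := by
    intro z; simp [hLdef, lam, hP0, eval_finset_sum]
  have hLfun : L = fun p => P0.eval p + u * (p - w)⁻¹ := by
    funext p; rw [hLval p, div_eq_mul_inv]
  have hQeval : ∀ z, Q.eval z = P0.derivative.eval z * (z - w) ^ 2 - u := by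
    intro z; simp [hQ]
  have hQw : Q.eval w = -u := by simp [hQ]
  have hQwne : Q.eval w ≠ 0 := by rw [hQw]; exact neg_ne_zero.mpr hu
  have hDL : ∀ z, z ≠ w → HasDerivAt L (P0.derivative.eval z + u * (-1 / ((z-w)^2))) z := by
    intro z hz
    rw [hLfun]
    exact (P0.hasDerivAt z).add
      ((((hasDerivAt_id z).sub_const w).inv (sub_ne_zero.mpr hz)).const_mul u)
  have hQr : ∀ k, Q.eval (r k) = 0 := by
    intro k
    have h := hcrit k
    rw [(hDL (r k) (hw k)).deriv] at h
    have hsub : r k - w ≠ 0 := sub_ne_zero.mpr (hw k)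
    rw [hQeval]
    field_simp at h
    linear_combination h
  have hQder : ∀ z, z ≠ w → deriv L z = Q.eval z / (z - w) ^ 2 := by
    intro z hz
    have hsub : z - w ≠ 0 := sub_ne_zero.mpr hz
    rw [(hDL z hz).deriv, hQeval]
    field_simp
    ring
  -- degrees of P0 and Q
  have hP0deg : P0.natDegree ≤ n + 1 := by
    rw [hP0]
    apply (natDegree_add_le _ _).trans
    simp only [natDegree_X_pow, max_le_iff, le_refl, true_and]
    apply (natDegree_sum_le_of_forall_le _ _ ?_)
    · intro j hj
      apply (natDegree_C_mul_le _ _).trans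
      simp only [natDegree_X_pow]
      have := Finset.mem_range.mp hj
      omega
  have hP0top : P0.coeff (n+1) = 1 := by
    rw [hP0]
    rw [coeff_add, coeff_X_pow, if_pos rfl, finset_sum_coeff]
    rw [Finset.sum_eq_zero, add_zero]
    intro j hj
    rw [coeff_C_mul, coeff_X_pow, if_neg (by simp at hj; omega), mul_zero]
  have hDP0deg : (derivative P0).natDegree ≤ n := by
    have := natDegree_derivative_le P0
    omega
  have hDP0top : (derivative P0).coeff n = (n:ℂ) + 1 := by
    rw [coeff_derivative, hP0top]; ring
  have hQdeg : Q.natDegree ≤ n + 2 := by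
    rw [hQ]
    apply (natDegree_sub_le _ _).trans
    simp only [natDegree_C, max_le_iff, Nat.zero_le, and_true]
    apply (natDegree_mul_le).trans
    have : ((X - C w)^2 : ℂ[X]).natDegree ≤ 2 := by
      simp [natDegree_pow, natDegree_X_sub_C]
    omega
  have hXw2 : ((X - C w)^2 : ℂ[X]).natDegree = 2 := by
    simp [natDegree_pow, natDegree_X_sub_C]
  have hQtop : Q.coeff (n+2) = (n:ℂ) + 1 := by
    rw [hQ, coeff_sub, coeff_C, if_neg (by omega), sub_zero]
    have h := coeff_mul_add_eq_of_natDegree_le (f := derivative P0) (g := (X - C w)^2)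
      hDP0deg hXw2.le
    rw [h, hDP0top]
    have : ((X - C w)^2 : ℂ[X]).coeff 2 = 1 := by
      have hm : ((X - C w)^2 : ℂ[X]).Monic := (monic_X_sub_C w).pow 2
      simpa [hXw2] using hm.coeff_natDegree
    rw [this, mul_one]
  have hQne : Q ≠ 0 := fun h => hu (by simpa [h] using hQw.symm)
  -- factorization of Q
  obtain ⟨Pr, hPr⟩ : ∃ x : ℂ[X], x = ∏ k : Fin (n+2), (X - C (r k)) := ⟨_, rfl⟩
  have hPrmon : Pr.Monic := by
    rw [hPr]; exact monic_prod_of_monic _ _ (fun k _ => monic_X_sub_C _)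
  have hPrdeg : Pr.natDegree = n + 2 := by
    rw [hPr, natDegree_prod_of_monic _ _ (fun k _ => monic_X_sub_C _)]
    simp [natDegree_X_sub_C]
  have hPrdvd : Pr ∣ Q := by
    rw [hPr]
    apply Finset.prod_dvd_of_coprime
    · exact (Polynomial.pairwise_coprime_X_sub_C hinj).set_pairwise _
    · exact fun k _ => dvd_iff_isRoot.mpr (hQr k)
  obtain ⟨q0, hq0⟩ := hPrdvd
  have hq0ne : q0 ≠ 0 := by rintro rfl; simp at hq0; exact hQne hq0
  have hq0deg : q0.natDegree = 0 := by
    have := natDegree_mul (hPrmon.ne_zero) hq0ne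
    rw [← hq0, hPrdeg] at this
    omega
  have hQfact : Q = Pr * C ((n:ℂ) + 1) := by
    rw [eq_C_of_natDegree_eq_zero hq0deg] at hq0
    rw [hq0]
    congr 2
    have : Q.coeff (n+2) = (Pr * C (q0.coeff 0)).coeff (n+2) := by rw [← hq0]
    rw [coeff_mul_C, ← hPrdeg, hPrmon.coeff_natDegree, one_mul, hPrdeg, hQtop] at this
    exact this.symm
  -- the cofactors Qk
  obtain ⟨Qk, hQk⟩ : ∃ x : Fin (n+2) → ℂ[X],
    x = fun k => C ((n:ℂ) + 1) * ∏ j ∈ Finset.univ.erase k, (X - C (r j)) := ⟨_, rfl⟩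
  have hQkfact : ∀ k, Q = (X - C (r k)) * Qk k := by
    intro k
    rw [hQfact, hPr, hQk, ← Finset.mul_prod_erase Finset.univ _ (Finset.mem_univ k)]
    ring
  have hQkval : ∀ k, (Qk k).eval (r k) ≠ 0 := by
    intro k
    rw [hQk]
    simp only [eval_mul, eval_C, eval_prod, eval_sub, eval_X]
    apply mul_ne_zero hn1
    rw [Finset.prod_ne_zero_iff]
    intro j hj
    exact sub_ne_zero.mpr (fun h => (Finset.mem_erase.mp hj).1 ((hinj h).symm))
  have hQkj : ∀ k j, j ≠ k → (Qk k).eval (r j) = 0 := by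
    intro k j hjk
    rw [hQk]
    simp only [eval_mul, eval_C, eval_prod, eval_sub, eval_X]
    apply mul_eq_zero_of_right
    exact Finset.prod_eq_zero (Finset.mem_erase.mpr ⟨hjk, Finset.mem_univ j⟩) (by simp)
  have hQkdeg : ∀ k, (Qk k).natDegree ≤ n + 1 := by
    intro k
    rw [hQk]
    apply natDegree_mul_le.trans
    simp only [natDegree_C, zero_add]
    apply (natDegree_prod_of_monic _ _ (fun j _ => monic_X_sub_C _)).le.trans
    simp [natDegree_X_sub_C, Finset.card_erase_of_mem]
  have hQktop : ∀ k, (Qk k).coeff (n+1) = (n:ℂ) + 1 := by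
    intro k
    rw [hQk, coeff_C_mul]
    have hm : (∏ j ∈ Finset.univ.erase k, (X - C (r j))).Monic :=
      monic_prod_of_monic _ _ (fun j _ => monic_X_sub_C _)
    have hd : (∏ j ∈ Finset.univ.erase k, (X - C (r j))).natDegree = n + 1 := by
      rw [natDegree_prod_of_monic _ _ (fun j _ => monic_X_sub_C _)]
      simp [natDegree_X_sub_C, Finset.card_erase_of_mem]
    rw [← hd, hm.coeff_natDegree, mul_one]
  -- the polynomial A with a double root at r i, and its cofactor B
  set c := L (r i) with hcdef
  clear_value c
  have hc : c = P0.eval (r i) + u / (r i - w) := by rw [hcdef]; exact hLval (r i)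
  have hcritQ : P0.derivative.eval (r i) * (r i - w)^2 - u = 0 := by
    rw [← hQeval]; exact hQr i
  obtain ⟨A, hA⟩ : ∃ x : ℂ[X], x = (P0 - C c) * (X - C w) + C u := ⟨_, rfl⟩
  have hsubi : r i - w ≠ 0 := sub_ne_zero.mpr (hw i)
  have hA0 : A.eval (r i) = 0 := by
    rw [hA]; simp only [eval_add, eval_mul, eval_sub, eval_C, eval_X]
    rw [hc]; field_simp
    ring
  have hA1 : A.derivative.eval (r i) = 0 := by
    rw [hA]
    simp only [derivative_add, derivative_mul, derivative_sub, derivative_C,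
      derivative_X, sub_zero, zero_mul, zero_add, add_zero, mul_one]
    simp only [eval_add, eval_mul, eval_sub, eval_C, eval_X]
    rw [hc]
    field_simp
    linear_combination hcritQ
  obtain ⟨A1, hA1f⟩ : (X - C (r i)) ∣ A := dvd_iff_isRoot.mpr hA0
  have hA1r : A1.eval (r i) = 0 := by
    have : A.derivative = A1 + (X - C (r i)) * A1.derivative := by
      rw [hA1f]; rw [derivative_mul]; simp
    rw [this] at hA1
    simpa using hA1
  obtain ⟨B, hBf⟩ : (X - C (r i)) ∣ A1 := dvd_iff_isRoot.mpr hA1r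
  have hAB : A = (X - C (r i))^2 * B := by rw [hA1f, hBf]; ring
  have hAdeg : A.natDegree ≤ n + 2 := by
    rw [hA]
    apply (natDegree_add_le _ _).trans
    simp only [natDegree_C, max_le_iff, Nat.zero_le, and_true]
    apply natDegree_mul_le.trans
    have h1 : (P0 - C c).natDegree ≤ n + 1 :=
      (natDegree_sub_le _ _).trans (by simp [hP0deg])
    have h2 : (X - C w : ℂ[X]).natDegree ≤ 1 := natDegree_X_sub_C_le w
    omega
  have hBdeg : B.natDegree ≤ n := by
    rcases eq_or_ne B 0 with h | h
    · simp [h]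
    · have hne : ((X - C (r i))^2 : ℂ[X]) ≠ 0 := ((monic_X_sub_C (r i)).pow 2).ne_zero
      have := natDegree_mul hne h
      rw [← hAB] at this
      have h2 : ((X - C (r i))^2 : ℂ[X]).natDegree = 2 := by
        simp [natDegree_pow, natDegree_X_sub_C]
      omega
  -- the scalar data: residues
  obtain ⟨ck, hck⟩ : ∃ x : Fin (n+2) → ℂ, x = fun k => B.eval (r k) / ((Qk k).eval (r k) * (r k - w)^3) := ⟨_, rfl⟩
  obtain ⟨φ1, hφ1⟩ : ∃ x : ℂ[X], x = derivative B * Q - B * derivative Q := ⟨_, rfl⟩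
  obtain ⟨s0, hs0⟩ : ∃ x : ℂ, x = B.eval w / Q.eval w := ⟨_, rfl⟩
  obtain ⟨s1, hs1⟩ : ∃ x : ℂ, x = φ1.eval w / (Q.eval w)^2 := ⟨_, rfl⟩
  obtain ⟨s2, hs2⟩ : ∃ x : ℂ, x = 2⁻¹ * ((φ1.derivative.eval w * (Q.eval w)^2
      - φ1.eval w * (2 * Q.eval w * Q.derivative.eval w)) / ((Q.eval w)^2)^2) := ⟨_, rfl⟩
  obtain ⟨S, hS⟩ : ∃ x : ℂ[X], x = C s0 + C s1 * (X - C w) + C s2 * (X - C w)^2 := ⟨_, rfl⟩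
  obtain ⟨G1, hG1⟩ : ∃ x : ℂ[X], x = ∑ k : Fin (n+2), C (ck k) * Qk k := ⟨_, rfl⟩
  obtain ⟨E, hE⟩ : ∃ x : ℂ[X], x = B - G1 * (X - C w)^3 - S * Q := ⟨_, rfl⟩
  have hErk : ∀ k, E.eval (r k) = 0 := by
    intro k
    have hrw : r k - w ≠ 0 := sub_ne_zero.mpr (hw k)
    rw [hE]
    simp only [eval_sub, eval_mul, eval_pow, eval_X, eval_C, hQr k, mul_zero, sub_zero]
    rw [hG1, eval_finset_sum]
    rw [Finset.sum_eq_single k (fun j _ hj => by simp [hQkj j k (Ne.symm hj)]) (by simp)]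
    simp only [eval_mul, eval_C]
    rw [hck]
    field_simp
    rw [div_self (hQkval k), sub_self, mul_zero]
  have hEw : E.eval w = 0 := by
    rw [hE, hS]
    simp only [eval_sub, eval_mul, eval_add, eval_pow, eval_X, eval_C, sub_self]
    rw [hs0]
    field_simp
    ring
  have hE'w : (derivative E).eval w = 0 := by
    rw [hE, hS]
    simp only [derivative_sub, derivative_mul, derivative_add, derivative_pow,
      derivative_C, derivative_X, derivative_one]
    simp only [eval_sub, eval_mul, eval_add, eval_pow, eval_X, eval_C, sub_self]
    simp only [zero_mul, mul_zero, zero_add, add_zero, mul_one, sub_zero, zero_pow]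
    rw [hs0, hs1, hφ1]
    simp only [eval_sub, eval_mul]
    field_simp
    simp only [eval_one, eval_zero]
    ring
  have hE''w : (derivative (derivative E)).eval w = 0 := by
    rw [hE, hS]
    simp only [derivative_sub, derivative_mul, derivative_add, derivative_pow,
      derivative_C, derivative_X, derivative_one]
    simp only [eval_sub, eval_mul, eval_add, eval_pow, eval_X, eval_C, sub_self]
    simp only [zero_mul, mul_zero, zero_add, add_zero, mul_one, sub_zero, zero_pow]
    rw [hs0, hs1, hs2, hφ1]
    simp only [derivative_sub, derivative_mul, eval_sub, eval_mul, eval_add]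
    simp only [eval_one, eval_zero, derivative_zero]
    field_simp
    ring
  -- E = 0
  have hPrE : (∏ k : Fin (n+2), (X - C (r k))) ∣ E := by
    apply Finset.prod_dvd_of_coprime
    · exact (Polynomial.pairwise_coprime_X_sub_C hinj).set_pairwise _
    · exact fun k _ => dvd_iff_isRoot.mpr (hErk k)
  have hWE : ((X - C w)^3 : ℂ[X]) ∣ E := by
    obtain ⟨E1, hE1⟩ : (X - C w) ∣ E := dvd_iff_isRoot.mpr hEw
    have hE1w : E1.eval w = 0 := by
      have hd : E.derivative = E1 + (X - C w) * E1.derivative := by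
        rw [hE1, derivative_mul]; simp
      have := hE'w
      rw [hd] at this
      simpa using this
    obtain ⟨E2, hE2⟩ : (X - C w) ∣ E1 := dvd_iff_isRoot.mpr hE1w
    have hE2w : E2.eval w = 0 := by
      have hd : E.derivative = E1 + (X - C w) * E1.derivative := by
        rw [hE1, derivative_mul]; simp
      have hd2 : (derivative (derivative E)).eval w = 2 * E1.derivative.eval w := by
        rw [hd]
        simp only [derivative_add, derivative_mul, derivative_sub, derivative_X,
          derivative_C, eval_add, eval_mul, eval_sub, eval_X, eval_C, sub_self,
          sub_zero, one_mul, zero_mul, mul_zero, add_zero, zero_add]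
        ring
      have hd3 : E1.derivative.eval w = 0 := by
        have h2' : (2:ℂ) * E1.derivative.eval w = 0 := by rw [← hd2, hE''w]
        exact (mul_eq_zero.mp h2').resolve_left two_ne_zero
      have hd4 : E1.derivative = E2 + (X - C w) * E2.derivative := by
        rw [hE2, derivative_mul]; simp
      rw [hd4] at hd3
      simpa using hd3
    obtain ⟨E3, hE3⟩ : (X - C w) ∣ E2 := dvd_iff_isRoot.mpr hE2w
    exact ⟨E3, by rw [hE1, hE2, hE3]; ring⟩
  have hdvd : (∏ k : Fin (n+2), (X - C (r k))) * (X - C w)^3 ∣ E := by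
    apply IsCoprime.mul_dvd _ hPrE hWE
    apply IsCoprime.prod_left
    intro k _
    exact (Polynomial.isCoprime_X_sub_C_of_isUnit_sub (by simp [sub_ne_zero.mpr (hw k)])).pow_right
  have hG1deg : G1.natDegree ≤ n + 1 := by
    rw [hG1]
    apply natDegree_sum_le_of_forall_le
    intro k _
    exact (natDegree_C_mul_le _ _).trans (hQkdeg k)
  have hEdeg : E.natDegree ≤ n + 4 := by
    rw [hE]
    apply (natDegree_sub_le _ _).trans
    apply max_le
    · apply (natDegree_sub_le _ _).trans
      apply max_le (by omega)
      apply natDegree_mul_le.trans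
      have h2 : ((X - C w)^3 : ℂ[X]).natDegree ≤ 3 := by
        simp [natDegree_pow, natDegree_X_sub_C]
      omega
    · apply natDegree_mul_le.trans
      have hSdeg : S.natDegree ≤ 2 := by
        rw [hS]
        apply (natDegree_add_le _ _).trans
        apply max_le
        · apply (natDegree_add_le _ _).trans
          apply max_le (by simp)
          exact (natDegree_C_mul_le _ _).trans (by simp [natDegree_X_sub_C])
        · apply (natDegree_C_mul_le _ _).trans
          simp [natDegree_pow, natDegree_X_sub_C]
      omega
  have hE0 : E = 0 := by
    by_contra h
    have h1 := Polynomial.natDegree_le_of_dvd hdvd h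
    have h2 : ((∏ k : Fin (n+2), (X - C (r k))) * (X - C w)^3).natDegree = n + 5 := by
      rw [natDegree_mul (monic_prod_of_monic _ _ (fun k _ => monic_X_sub_C _)).ne_zero
        ((monic_X_sub_C w).pow 3).ne_zero]
      rw [natDegree_prod_of_monic _ _ (fun k _ => monic_X_sub_C _)]
      simp [natDegree_X_sub_C, natDegree_pow]
    omega
  -- coefficient extraction: ∑ ck + s2 = 0
  have hXw3top : ((X - C w)^3 : ℂ[X]).coeff 3 = 1 := by
    have hm : ((X - C w)^3 : ℂ[X]).Monic := (monic_X_sub_C w).pow 3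
    have hd : ((X - C w)^3 : ℂ[X]).natDegree = 3 := by simp [natDegree_pow, natDegree_X_sub_C]
    simpa [hd] using hm.coeff_natDegree
  have hG1top : G1.coeff (n + 1) = (∑ k : Fin (n+2), ck k) * ((n:ℂ) + 1) := by
    rw [hG1, finset_sum_coeff, Finset.sum_mul]
    exact Finset.sum_congr rfl (fun k _ => by rw [coeff_C_mul, hQktop k])
  have hStop : S.coeff 2 = s2 := by
    rw [hS, coeff_add, coeff_add, coeff_C, if_neg (by omega)]
    rw [coeff_eq_zero_of_natDegree_lt
      ((natDegree_C_mul_le _ _).trans_lt (by simp [natDegree_X_sub_C]) : (C s1 * (X - C w)).natDegree < 2)]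
    have h2 : ((X - C w)^2 : ℂ[X]).coeff 2 = 1 := by
      have hm : ((X - C w)^2 : ℂ[X]).Monic := (monic_X_sub_C w).pow 2
      have hd : ((X - C w)^2 : ℂ[X]).natDegree = 2 := by simp [natDegree_pow, natDegree_X_sub_C]
      simpa [hd] using hm.coeff_natDegree
    rw [coeff_C_mul, h2]
    ring
  have hcoeff : (0:ℂ) = -((∑ k : Fin (n+2), ck k) * ((n:ℂ) + 1)) - s2 * ((n:ℂ) + 1) := by
    have h0 : E.coeff (n + 4) = 0 := by rw [hE0]; simp
    rw [hE, coeff_sub, coeff_sub] at h0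
    rw [coeff_eq_zero_of_natDegree_lt (by omega : B.natDegree < n + 4)] at h0
    have e1 : (G1 * (X - C w)^3).coeff (n + 4) = (∑ k : Fin (n+2), ck k) * ((n:ℂ) + 1) := by
      have hn4 : (n + 4) = (n + 1) + 3 := by omega
      rw [hn4, coeff_mul_add_eq_of_natDegree_le hG1deg (by simp [natDegree_pow, natDegree_X_sub_C]),
        hXw3top, mul_one, hG1top]
    have e2 : (S * Q).coeff (n + 4) = s2 * ((n:ℂ) + 1) := by
      have hSdeg : S.natDegree ≤ 2 := by
        rw [hS]
        apply (natDegree_add_le _ _).trans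
        apply max_le
        · apply (natDegree_add_le _ _).trans
          apply max_le (by simp)
          exact (natDegree_C_mul_le _ _).trans (by simp [natDegree_X_sub_C])
        · apply (natDegree_C_mul_le _ _).trans
          simp [natDegree_pow, natDegree_X_sub_C]
      have hn4 : (n + 4) = 2 + (n + 2) := by omega
      rw [hn4, coeff_mul_add_eq_of_natDegree_le hSdeg hQdeg, hStop, hQtop]
    rw [e1, e2] at h0
    linear_combination -h0
  have hsum : (∑ k : Fin (n+2), ck k) + s2 = 0 := by
    have h2 : ((∑ k : Fin (n+2), ck k) + s2) * ((n:ℂ) + 1) = 0 := by linear_combination hcoeff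
    exact (mul_eq_zero.mp h2).resolve_right hn1
  -- the key identity for h₃
  have key1 : ∀ z, Q.eval z ≠ 0 → z ≠ w →
      (L z - c) / (deriv L z * (z - r i) ^ 2 * (z - w) ^ 4)
        = B.eval z / (Q.eval z * (z - w)^3) := by
    intro z hQz hzw
    have hzri : z ≠ r i := fun h => hQz (h ▸ hQr i)
    have hzw0 : z - w ≠ 0 := sub_ne_zero.mpr hzw
    have hzr0 : z - r i ≠ 0 := sub_ne_zero.mpr hzri
    rw [hQder z hzw]
    have hnum : L z - c = A.eval z / (z - w) := by
      rw [hLval z, hA]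
      simp only [eval_add, eval_mul, eval_sub, eval_C, eval_X]
      field_simp
      ring
    have hAz : A.eval z = (z - r i)^2 * B.eval z := by
      rw [hAB]; simp [eval_mul, eval_pow, eval_sub, eval_X, eval_C]
    rw [hnum, hAz]
    have hden : Q.eval z / (z-w)^2 * (z - r i)^2 * (z-w)^4
        = Q.eval z * ((z - r i)^2 * (z-w)^2) := by
      field_simp
    rw [hden, div_div]
    rw [div_eq_div_iff
      (mul_ne_zero hzw0 (mul_ne_zero hQz (mul_ne_zero (pow_ne_zero 2 hzr0) (pow_ne_zero 2 hzw0))))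
      (mul_ne_zero hQz (pow_ne_zero 3 hzw0))]
    ring
  -- residues at the critical points
  have res1 : ∀ k, residueOrd 1
      (fun z => (L z - c) / (deriv L z * (z - r i) ^ 2 * (z - w) ^ 4)) (r k) = ck k := by
    intro k
    rw [residueOrd]
    have heq : (fun z => ((Nat.factorial (1 - 1) : ℂ))⁻¹ *
        iteratedDeriv (1 - 1) (fun t => (t - r k) ^ 1 *
          ((L t - c) / (deriv L t * (t - r i) ^ 2 * (t - w) ^ 4))) z)
        = fun z => (z - r k) * ((L z - c) / (deriv L z * (z - r i) ^ 2 * (z - w) ^ 4)) := by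
      funext z
      simp [iteratedDeriv_zero]
    rw [heq]
    apply Filter.Tendsto.limUnder_eq
    have hO : IsOpen {z : ℂ | (Qk k).eval z ≠ 0 ∧ z ≠ w} := by
      apply IsOpen.inter
      · exact isOpen_ne_fun (Qk k).continuous_aeval continuous_const
      · exact isOpen_ne
    have hmem : r k ∈ {z : ℂ | (Qk k).eval z ≠ 0 ∧ z ≠ w} := ⟨hQkval k, hw k⟩
    have hev : ∀ᶠ z in nhdsWithin (r k) {r k}ᶜ,
        (z - r k) * ((L z - c) / (deriv L z * (z - r i) ^ 2 * (z - w) ^ 4))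
          = B.eval z / ((Qk k).eval z * (z - w)^3) := by
      filter_upwards [eventually_nhdsWithin_of_eventually_nhds
        (hO.mem_nhds hmem), self_mem_nhdsWithin] with z hz hz2
      have hzr : z - r k ≠ 0 := sub_ne_zero.mpr hz2
      have hQz : Q.eval z ≠ 0 := by
        rw [hQkfact k]
        simp only [eval_mul, eval_sub, eval_X, eval_C]
        exact mul_ne_zero hzr hz.1
      rw [key1 z hQz hz.2]
      rw [hQkfact k]
      simp only [eval_mul, eval_sub, eval_X, eval_C]
      rw [show (z - r k) * eval z (Qk k) * (z - w)^3
        = (z - r k) * (eval z (Qk k) * (z - w)^3) from by ring]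
      rw [← mul_div_assoc]
      exact mul_div_mul_left _ _ hzr
    apply Filter.Tendsto.congr' (Filter.EventuallyEq.symm hev)
    have hcont : ContinuousAt (fun z => B.eval z / ((Qk k).eval z * (z - w)^3)) (r k) := by
      apply ContinuousAt.div
      · exact B.continuous_aeval.continuousAt
      · exact ((Qk k).continuous_aeval.continuousAt).mul (by fun_prop)
      · exact mul_ne_zero (hQkval k) (pow_ne_zero 3 (sub_ne_zero.mpr (hw k)))
    rw [hck]
    exact hcont.continuousWithinAt
  -- residue at w
  have res3 : residueOrd 3
      (fun z => (L z - c) / (deriv L z * (z - r i) ^ 2 * (z - w) ^ 4)) w = s2 := by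
    rw [residueOrd]
    have hfac : ((Nat.factorial (3 - 1) : ℂ)) = 2 := by norm_num [Nat.factorial]
    obtain ⟨num2, hnum2⟩ : ∃ x : ℂ → ℂ, x = fun z => (φ1.derivative.eval z * (Q.eval z)^2
        - φ1.eval z * (2 * Q.eval z * Q.derivative.eval z)) / ((Q.eval z)^2)^2 := ⟨_, rfl⟩
    obtain ⟨φ, hφ⟩ : ∃ x : ℂ → ℂ, x = fun t => B.eval t / Q.eval t := ⟨_, rfl⟩
    obtain ⟨ψ, hψ⟩ : ∃ x : ℂ → ℂ, x = fun t => φ1.eval t / (Q.eval t)^2 := ⟨_, rfl⟩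
    have hU : IsOpen {z : ℂ | Q.eval z ≠ 0} :=
      isOpen_ne_fun Q.continuous_aeval continuous_const
    have hW : IsOpen {z : ℂ | Q.eval z ≠ 0 ∧ z ≠ w} := hU.inter isOpen_ne
    have hφψ : ∀ z, Q.eval z ≠ 0 → deriv φ z = ψ z := by
      intro z hz
      have h : deriv (fun t => B.eval t / Q.eval t) z = _ := ((B.hasDerivAt z).div (Q.hasDerivAt z) hz).deriv
      rw [hφ, hψ, h, hφ1]
      simp [eval_sub, eval_mul]
    have hψn : ∀ z, Q.eval z ≠ 0 → deriv ψ z = num2 z := by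
      intro z hz
      have hg : HasDerivAt (fun t => (Q.eval t)^2)
          ((2:ℕ) * (Q.eval z)^(2-1) * Q.derivative.eval z) z := (Q.hasDerivAt z).pow 2
      have h : deriv (fun t => φ1.eval t / (Q.eval t)^2) z = _ := ((φ1.hasDerivAt z).div hg (pow_ne_zero 2 hz)).deriv
      rw [hψ, hnum2, h]
      push_cast
      ring_nf
    have hiter : ∀ z, Q.eval z ≠ 0 → z ≠ w →
        iteratedDeriv 2 (fun t => (t - w)^3 *
          ((L t - c) / (deriv L t * (t - r i) ^ 2 * (t - w) ^ 4))) z = num2 z := by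
      intro z hz hzw
      have hevW : ∀ᶠ t in nhds z, Q.eval t ≠ 0 ∧ t ≠ w := hW.mem_nhds ⟨hz, hzw⟩
      have hFφ : (fun t => (t - w)^3 *
          ((L t - c) / (deriv L t * (t - r i) ^ 2 * (t - w) ^ 4))) =ᶠ[nhds z] φ := by
        filter_upwards [hevW] with t ht
        rw [key1 t ht.1 ht.2, hφ]
        have htw : t - w ≠ 0 := sub_ne_zero.mpr ht.2
        rw [show Q.eval t * (t - w)^3 = (t - w)^3 * Q.eval t from by ring]
        rw [← mul_div_assoc]
        exact mul_div_mul_left _ _ (pow_ne_zero 3 htw)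
      rw [iteratedDeriv_succ, iteratedDeriv_one]
      have h1 : deriv (fun t => (t - w)^3 *
          ((L t - c) / (deriv L t * (t - r i) ^ 2 * (t - w) ^ 4))) =ᶠ[nhds z] deriv φ :=
        hFφ.deriv
      have h2 : deriv φ =ᶠ[nhds z] ψ := by
        filter_upwards [hU.mem_nhds hz] with t ht
        exact hφψ t ht
      rw [(h1.trans h2).deriv_eq]
      exact hψn z hz
    apply Filter.Tendsto.limUnder_eq
    have hev : ∀ᶠ z in nhdsWithin w {w}ᶜ,
        ((Nat.factorial (3 - 1) : ℂ))⁻¹ * iteratedDeriv (3-1) (fun t => (t - w)^3 *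
          ((L t - c) / (deriv L t * (t - r i) ^ 2 * (t - w) ^ 4))) z
          = 2⁻¹ * num2 z := by
      filter_upwards [eventually_nhdsWithin_of_eventually_nhds (hU.mem_nhds hQwne),
        self_mem_nhdsWithin] with z hz hz2
      rw [hfac, hiter z hz (by simpa using hz2)]
    apply Filter.Tendsto.congr' (Filter.EventuallyEq.symm hev)
    have hcont : ContinuousAt num2 w := by
      rw [hnum2]
      apply ContinuousAt.div
      · fun_prop
      · fun_prop
      · exact pow_ne_zero 2 (pow_ne_zero 2 hQwne)
    rw [hs2]
    have hnw : (φ1.derivative.eval w * (Q.eval w)^2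
        - φ1.eval w * (2 * Q.eval w * Q.derivative.eval w)) / ((Q.eval w)^2)^2 = num2 w := by
      rw [hnum2]
    rw [hnw]
    exact ((hcont.tendsto.mono_left nhdsWithin_le_nhds).const_mul (2:ℂ)⁻¹)
  rw [Finset.sum_congr rfl (fun k _ => res1 k), res3]
  exact hsum
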